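/- Let K be a number field and let α, β be nonzero elements of K that are multiplicatively independent: for all integers a, b, if α^a·β^b = 1 (with integer, possibly negative, exponents) then a = 0 and b = 0. Then the set of prime numbers p for which there exist integers r, s, not both divisible by p, and an element λ ∈ K with α^r·β^s = λ^p, is finite. -/

import Mathlib

open IsDedekindDomain IsDedekindDomain.HeightOneSpectrum

open scoped nonZeroDivisors Multiplicative

section Associates

variable {A : Type*} [CommMonoidWithZero A] [UniqueFactorizationMonoid A]

theorem my_assoc_le [DecidableEq (Associates A)] [∀ p : Associates A, Decidable (Irreducible p)]
    {a b : Associates A} (ha : a ≠ 0) (hb : b ≠ 0)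
    (h : ∀ p : Associates A, Irreducible p → p.count a.factors ≤ p.count b.factors) : a ≤ b := by
  rw [← Associates.factors_le]
  obtain ⟨sa, h_sa⟩ := Associates.factors_eq_some_iff_ne_zero.mpr ha
  obtain ⟨sb, h_sb⟩ := Associates.factors_eq_some_iff_ne_zero.mpr hb
  rw [h_sa, h_sb] at h ⊢
  rw [WithTop.coe_le_coe, Multiset.le_iff_count]
  rintro ⟨p, hp⟩
  have := h p hp
  rwa [Associates.count_some hp, Associates.count_some hp] at this

end Associates

section Dedekind

variable {R : Type*} [CommRing R] [IsDedekindDomain R]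
variable {K : Type*} [Field K] [Algebra R K] [IsFractionRing R K]

theorem my_dvd_of_intval {n d : R} (hd : d ≠ 0)
    (h : ∀ v : HeightOneSpectrum R, v.intValuationDef n ≤ v.intValuationDef d) : d ∣ n := by
  classical
  by_cases hn : n = 0
  · simp [hn]
  have hdb : Ideal.span {d} ≠ (⊥ : Ideal R) := by
    simpa [Ideal.span_singleton_eq_bot] using hd
  have hnb : Ideal.span {n} ≠ (⊥ : Ideal R) := by
    simpa [Ideal.span_singleton_eq_bot] using hn
  have hspan : @LE.le (Associates (Ideal R)) Associates.instPreorder.toLE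
      (Associates.mk (Ideal.span {d} : Ideal R)) (Associates.mk (Ideal.span {n})) := by
    apply my_assoc_le (by simpa [Associates.mk_ne_zero] using hdb)
      (by simpa [Associates.mk_ne_zero] using hnb)
    intro p hp
    obtain ⟨P, rfl⟩ := Associates.mk_surjective p
    have hPirr : Irreducible P := Associates.irreducible_mk.mp hp
    have hPprime : Prime P := UniqueFactorizationMonoid.irreducible_iff_prime.mp hPirr
    let v : HeightOneSpectrum R := ⟨P, Ideal.isPrime_of_prime hPprime, hPprime.ne_zero⟩
    have hv := h v
    rw [v.intValuationDef_if_neg hn, v.intValuationDef_if_neg hd] at hv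
    rw [WithZero.exp_le_exp, neg_le_neg_iff, Nat.cast_le] at hv
    exact hv
  rw [Associates.mk_le_mk_iff_dvd, Ideal.dvd_iff_le] at hspan
  exact Ideal.span_singleton_le_span_singleton.mp hspan

theorem my_exists_algebraMap {x : K} (h : ∀ v : HeightOneSpectrum R, v.valuation K x ≤ 1) :
    ∃ a : R, algebraMap R K a = x := by
  obtain ⟨⟨n, d⟩, hx⟩ := IsLocalization.surj R⁰ x
  dsimp only at hx
  have hd0 : (d : R) ≠ 0 := nonZeroDivisors.ne_zero d.2
  have hdvd : (d : R) ∣ n := by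
    apply my_dvd_of_intval hd0
    intro v
    have h1 : v.valuation K (algebraMap R K n) = v.valuation K x * v.valuation K (algebraMap R K d) := by
      rw [← map_mul, ← hx]
    have h2 : v.valuation K (algebraMap R K n) ≤ v.valuation K (algebraMap R K d) := by
      rw [h1]
      calc v.valuation K x * v.valuation K (algebraMap R K (d : R))
          ≤ 1 * v.valuation K (algebraMap R K (d : R)) := by
            exact mul_le_mul_left (h v) _
        _ = v.valuation K (algebraMap R K (d : R)) := one_mul _
    rwa [v.valuation_of_algebraMap, v.valuation_of_algebraMap, v.intValuation_apply,
      v.intValuation_apply] at h2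
  obtain ⟨c, hc⟩ := hdvd
  refine ⟨c, ?_⟩
  have hdK : algebraMap R K (d : R) ≠ 0 := by
    simpa using (IsFractionRing.injective R K).ne_iff.mpr hd0
  apply mul_right_cancel₀ hdK
  rw [hx, hc, map_mul, mul_comm]

theorem my_finite_val_ne_one {x : K} (hx : x ≠ 0) :
    {v : HeightOneSpectrum R | v.valuation K x ≠ 1}.Finite := by
  obtain ⟨⟨n, d⟩, hxx⟩ := IsLocalization.surj R⁰ x
  dsimp only at hxx
  have hd0 : (d : R) ≠ 0 := nonZeroDivisors.ne_zero d.2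
  have hn0 : n ≠ 0 := by
    intro h
    apply hx
    have hdK : algebraMap R K (d : R) ≠ 0 := by
      simpa using (IsFractionRing.injective R K).ne_iff.mpr hd0
    rw [h, map_zero] at hxx
    exact (mul_eq_zero.mp hxx).resolve_right hdK
  have hnb : Ideal.span {n} ≠ (⊥ : Ideal R) := by
    simpa [Ideal.span_singleton_eq_bot] using hn0
  have hdb : Ideal.span {(d : R)} ≠ (⊥ : Ideal R) := by
    simpa [Ideal.span_singleton_eq_bot] using hd0
  apply Set.Finite.subset ((Ideal.finite_factors hnb).union (Ideal.finite_factors hdb))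
  intro v hv
  by_contra hvn
  simp only [Set.mem_union, Set.mem_setOf_eq, not_or] at hvn
  apply hv
  have h1 : v.intValuationDef n = 1 :=
    le_antisymm (v.intValuation_le_one n)
      (not_lt.mp (fun hlt => hvn.1 ((v.intValuation_lt_one_iff_dvd n).mp hlt)))
  have h2 : v.intValuationDef (d : R) = 1 :=
    le_antisymm (v.intValuation_le_one (d : R))
      (not_lt.mp (fun hlt => hvn.2 ((v.intValuation_lt_one_iff_dvd (d : R)).mp hlt)))
  have h3 : v.valuation K x * v.valuation K (algebraMap R K (d : R)) =
      v.valuation K (algebraMap R K n) := by rw [← map_mul, hxx]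
  rw [v.valuation_of_algebraMap, v.valuation_of_algebraMap, v.intValuation_apply,
    v.intValuation_apply, h1, h2, mul_one] at h3
  exact h3

end Dedekind




theorem my_module_finiteness {M : Type*} [AddCommGroup M] (N : Submodule ℤ M) (hN : N.FG)
    {a b : M} (ha : a ∈ N) (hb : b ∈ N)
    (hind : ∀ r s : ℤ, r • a + s • b = 0 → r = 0 ∧ s = 0) :
    {p : ℕ | p.Prime ∧ ∃ r s : ℤ, ¬ ((p : ℤ) ∣ r ∧ (p : ℤ) ∣ s) ∧
      ∃ c ∈ N, r • a + s • b = (p : ℤ) • c}.Finite := by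
  classical
  haveI : Module.Finite ℤ ↥N := Module.Finite.iff_fg.mpr hN
  obtain ⟨s, hs⟩ := IsNoetherian.noetherian (Submodule.torsion ℤ ↥N)
  have hsub : (↑s : Set ↥N) ⊆ (Submodule.torsion ℤ ↥N : Set ↥N) := hs ▸ Submodule.subset_span
  have hkill : ∃ m : ℤ, m ≠ 0 ∧ ∀ t ∈ Submodule.torsion ℤ ↥N, m • t = 0 := by
    have hex : ∀ x ∈ s, ∃ m : ℤ, m ≠ 0 ∧ m • x = 0 := by
      intro x hx
      obtain ⟨⟨m, hm⟩, hmx⟩ := hsub hx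
      exact ⟨m, nonZeroDivisors.ne_zero hm, hmx⟩
    choose f hf0 hfx using hex
    refine ⟨∏ x ∈ s.attach, f x.1 x.2, Finset.prod_ne_zero_iff.mpr fun x _ => hf0 x.1 x.2, ?_⟩
    intro t ht
    rw [← hs] at ht
    induction ht using Submodule.span_induction with
    | mem x hx =>
        obtain ⟨c, hc⟩ := Finset.dvd_prod_of_mem (fun y : {z // z ∈ s} => f y.1 y.2)
          (Finset.mem_attach s ⟨x, hx⟩)
        rw [hc, mul_comm, mul_smul, hfx x hx, smul_zero]
    | zero => simp
    | add x y _ _ hx hy => rw [smul_add, hx, hy, add_zero]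
    | smul c x _ hx => rw [smul_comm, hx, smul_zero]
  obtain ⟨m, hm0, hmT⟩ := hkill
  haveI : Module.Finite ℤ (↥N ⧸ Submodule.torsion ℤ ↥N) :=
    Module.Finite.quotient ℤ (Submodule.torsion ℤ ↥N)
  haveI : Module.Free ℤ (↥N ⧸ Submodule.torsion ℤ ↥N) := Module.free_of_finite_type_torsion_free'
  let bas := Module.Free.chooseBasis ℤ (↥N ⧸ Submodule.torsion ℤ ↥N)
  let π : ↥N →ₗ[ℤ] (↥N ⧸ Submodule.torsion ℤ ↥N) := (Submodule.torsion ℤ ↥N).mkQ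
  let φ : ↥N →ₗ[ℤ] (Module.Free.ChooseBasisIndex ℤ (↥N ⧸ Submodule.torsion ℤ ↥N) →₀ ℤ) :=
    (bas.repr : (↥N ⧸ Submodule.torsion ℤ ↥N) ≃ₗ[ℤ] _).toLinearMap.comp π
  have hker : ∀ x : ↥N, φ x = 0 → m • x = 0 := by
    intro x hx
    apply hmT
    have : π x = 0 := by
      have h1 : bas.repr (π x) = 0 := hx
      have := congrArg bas.repr.symm h1
      rwa [bas.repr.symm_apply_apply, map_zero] at this
    rwa [← Submodule.Quotient.mk_eq_zero (Submodule.torsion ℤ ↥N)]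
  -- independence of the coordinate vectors
  have hindQ : ∀ r s : ℤ, r • φ ⟨a, ha⟩ + s • φ ⟨b, hb⟩ = 0 → r = 0 ∧ s = 0 := by
    intro r s hrs
    have h1 : φ (r • ⟨a, ha⟩ + s • ⟨b, hb⟩) = 0 := by
      rw [map_add, map_smul, map_smul]; exact hrs
    have h2 := hker _ h1
    rw [smul_add, smul_smul, smul_smul] at h2
    have hcoe : (m * r) • a + (m * s) • b = 0 := by
      have h3 := congrArg (Subtype.val) h2
      push_cast at h3
      simpa using h3
    obtain ⟨h4, h5⟩ := hind _ _ hcoe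
    exact ⟨(mul_eq_zero.mp h4).resolve_left hm0, (mul_eq_zero.mp h5).resolve_left hm0⟩
  set A := φ ⟨a, ha⟩ with hA
  set B := φ ⟨b, hb⟩ with hB
  have hminor : ∃ i j, A i * B j - A j * B i ≠ 0 := by
    by_contra hcon
    push_neg at hcon
    have hA0 : A ≠ 0 := by
      intro h0
      exact one_ne_zero (hindQ 1 0 (by rw [h0]; simp)).1
    obtain ⟨i, hi⟩ := Finsupp.ne_iff.mp hA0
    have hrel : (B i) • A + (-(A i)) • B = 0 := by
      ext j
      simp only [Finsupp.add_apply, Finsupp.smul_apply, smul_eq_mul, Finsupp.coe_zero,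
        Pi.zero_apply]
      linear_combination -(hcon i j)
    exact hi (neg_eq_zero.mp (hindQ _ _ hrel).2)
  obtain ⟨i, j, hD⟩ := hminor
  apply Set.Finite.subset (Set.finite_Iic (A i * B j - A j * B i).natAbs)
  rintro p ⟨hp, r, s, hrs, c, hcN, hceq⟩
  have heqN : r • (⟨a, ha⟩ : ↥N) + s • ⟨b, hb⟩ = (p : ℤ) • ⟨c, hcN⟩ := by
    apply Subtype.ext
    push_cast
    simpa using hceq
  have hcoord : ∀ k, r * A k + s * B k = (p : ℤ) * φ ⟨c, hcN⟩ k := by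
    intro k
    have h1 := congrArg (fun x => φ x k) heqN
    simp only [map_add, map_smul, Finsupp.add_apply, Finsupp.smul_apply, smul_eq_mul] at h1
    rw [← hA, ← hB] at h1
    exact h1
  have hpD : (p : ℤ) ∣ (A i * B j - A j * B i) := by
    by_contra hpD
    have hpprime : Prime (p : ℤ) := Nat.prime_iff_prime_int.mp hp
    apply hrs
    refine ⟨?_, ?_⟩
    · have hdvd : (p : ℤ) ∣ r * (A i * B j - A j * B i) := by
        refine ⟨B j * φ ⟨c, hcN⟩ i - B i * φ ⟨c, hcN⟩ j, ?_⟩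
        linear_combination (B j) * hcoord i - (B i) * hcoord j
      exact (hpprime.dvd_mul.mp hdvd).resolve_right hpD
    · have hdvd : (p : ℤ) ∣ s * (A i * B j - A j * B i) := by
        refine ⟨A i * φ ⟨c, hcN⟩ j - A j * φ ⟨c, hcN⟩ i, ?_⟩
        linear_combination (A i) * hcoord j - (A j) * hcoord i
      exact (hpprime.dvd_mul.mp hdvd).resolve_right hpD
  exact Set.mem_Iic.mpr (Nat.le_of_dvd (Nat.pos_of_ne_zero (Int.natAbs_ne_zero.mpr hD))
    (Int.ofNat_dvd.mp (by simpa [Int.natAbs_dvd_natAbs] using hpD)))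


private theorem my_zm0_pow_eq_one {u : WithZero (Multiplicative ℤ)} (hu : u ≠ 0) {p : ℕ}
    (hp : p ≠ 0) (h : u ^ p = 1) : u = 1 := by
  obtain ⟨m, rfl⟩ := WithZero.ne_zero_iff_exists.mp hu
  rw [← WithZero.coe_pow] at h
  have h3 : m ^ p = 1 := by exact_mod_cast h
  have h2 := congrArg Multiplicative.toAdd h3
  rw [toAdd_pow, toAdd_one, nsmul_eq_mul] at h2
  rcases mul_eq_zero.mp h2 with h4 | h4
  · exact absurd (Nat.cast_eq_zero.mp h4) hp
  · have h5 : m = 1 := by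
      rw [← toAdd_one] at h4
      exact Multiplicative.toAdd.injective h4
    rw [h5]
    exact WithZero.coe_one

theorem stmt16 (K : Type*) [Field K] [NumberField K] (α β : K)
    (hα : α ≠ 0) (hβ : β ≠ 0)
    (hindep : ∀ a b : ℤ, α ^ a * β ^ b = 1 → a = 0 ∧ b = 0) :
    {p : ℕ | p.Prime ∧ ∃ r s : ℤ, ¬ ((p : ℤ) ∣ r ∧ (p : ℤ) ∣ s) ∧
      ∃ lam : K, α ^ r * β ^ s = lam ^ p}.Finite := by
  classical
  set R := NumberField.RingOfIntegers K with hR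
  set α' : Kˣ := Units.mk0 α hα with hα'
  set β' : Kˣ := Units.mk0 β hβ with hβ'
  set S : Set (HeightOneSpectrum R) :=
    {v | v.valuation K α ≠ 1} ∪ {v | v.valuation K β ≠ 1} with hSdef
  have hS : S.Finite := (my_finite_val_ne_one hα).union (my_finite_val_ne_one hβ)
  haveI := hS.fintype
  -- the S-unit submodule of `Additive Kˣ`
  set N : Submodule ℤ (Additive Kˣ) :=
    { carrier := {x | ∀ v ∉ S, v.valuation K ((Additive.toMul x : Kˣ) : K) = 1}
      add_mem' := by
        intro x y hx hy v hv
        rw [toMul_add, Units.val_mul, map_mul, hx v hv, hy v hv, mul_one]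
      zero_mem' := by
        intro v hv
        rw [toMul_zero, Units.val_one, map_one]
      smul_mem' := by
        intro z x hx v hv
        rw [toMul_zsmul, Units.val_zpow_eq_zpow_val, map_zpow₀, hx v hv, one_zpow] } with hNdef
  have hmemN : ∀ u : Kˣ, (∀ v ∉ S, v.valuation K (u : K) = 1) → Additive.ofMul u ∈ N :=
    fun u h => h
  have haN : Additive.ofMul α' ∈ N := hmemN α' (fun v hv => by
    rw [hSdef, Set.mem_union, not_or] at hv
    simpa [hα'] using not_not.mp hv.1)
  have hbN : Additive.ofMul β' ∈ N := hmemN β' (fun v hv => by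
    rw [hSdef, Set.mem_union, not_or] at hv
    simpa [hβ'] using not_not.mp hv.2)
  -- independence
  have hind : ∀ r s : ℤ, r • Additive.ofMul α' + s • Additive.ofMul β' = 0 →
      r = 0 ∧ s = 0 := by
    intro r s h
    rw [← ofMul_zpow, ← ofMul_zpow, ← ofMul_mul, ofMul_eq_zero] at h
    apply hindep
    have := congrArg Units.val h
    simpa [Units.val_zpow_eq_zpow_val, hα', hβ'] using this
  -- the valuation map to `↥S → ℤ`
  set F₀ : Additive Kˣ →+ (↥S → ℤ) :=
    { toFun := fun x v => Multiplicative.toAdd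
        ((v : HeightOneSpectrum R).valuationOfNeZero (Additive.toMul x))
      map_zero' := by
        funext v
        show Multiplicative.toAdd (_root_.IsDedekindDomain.HeightOneSpectrum.valuationOfNeZero
          (v : HeightOneSpectrum R) (Additive.toMul (0 : Additive Kˣ))) = 0
        rw [toMul_zero, map_one, toAdd_one]
      map_add' := by
        intro x y
        funext v
        show Multiplicative.toAdd (_root_.IsDedekindDomain.HeightOneSpectrum.valuationOfNeZero
            (v : HeightOneSpectrum R) (Additive.toMul (x + y))) = _
        rw [toMul_add, map_mul, toAdd_mul]
        rfl } with hF₀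
  set F : Additive Kˣ →ₗ[ℤ] (↥S → ℤ) := F₀.toIntLinearMap with hF
  -- the unit map from `Additive Rˣ`
  set G : Additive Rˣ →ₗ[ℤ] Additive Kˣ :=
    (MonoidHom.toAdditive (Units.map (algebraMap R K : R →* K))).toIntLinearMap with hG
  haveI : Module.Finite ℤ (Additive Rˣ) := by
    rw [Module.Finite.iff_addGroup_fg, AddGroup.fg_iff_addMonoid_fg, ← Monoid.fg_iff_add_fg]
    infer_instance
  have hN : N.FG := by
    apply Submodule.fg_of_fg_map_of_fg_inf_ker F
    · exact IsNoetherian.noetherian _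
    · have hle : N ⊓ LinearMap.ker F ≤ LinearMap.range G := by
        rintro x ⟨hxN, hxF⟩
        have hval : ∀ v : HeightOneSpectrum R, v.valuation K ((Additive.toMul x : Kˣ) : K) = 1 := by
          intro v
          by_cases hv : v ∈ S
          · have h1 := congrFun (LinearMap.mem_ker.mp hxF) ⟨v, hv⟩
            have h2 : v.valuationOfNeZero (Additive.toMul x) = 1 := by
              have h3 : Multiplicative.toAdd (v.valuationOfNeZero (Additive.toMul x)) = 0 := h1
              rw [← toAdd_one] at h3
              exact Multiplicative.toAdd.injective h3
            rw [← v.valuationOfNeZero_eq, h2]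
            exact WithZero.coe_one
          · exact hxN v hv
        obtain ⟨a', ha'⟩ := my_exists_algebraMap
          (x := ((Additive.toMul x : Kˣ) : K)) (fun v => (hval v).le)
        obtain ⟨b', hb'⟩ := my_exists_algebraMap
          (x := (((Additive.toMul x)⁻¹ : Kˣ) : K)) (fun v => by
            rw [Units.val_inv_eq_inv_val, map_inv₀, hval v, inv_one])
        have hab : a' * b' = 1 := by
          apply IsFractionRing.injective R K
          rw [map_mul, ha', hb', map_one, Units.val_inv_eq_inv_val,
            mul_inv_cancel₀ (Units.ne_zero _)]
        have hba : b' * a' = 1 := by rw [mul_comm]; exact hab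
        refine ⟨Additive.ofMul (⟨a', b', hab, hba⟩ : Rˣ), ?_⟩
        show Additive.ofMul (Units.map (algebraMap R K : R →* K) ⟨a', b', hab, hba⟩) = x
        rw [← (Additive.toMul (α := Kˣ)).symm_apply_apply x]
        congr 1
        ext
        exact ha'
      have heq : N ⊓ LinearMap.ker F =
          Submodule.map G (Submodule.comap G (N ⊓ LinearMap.ker F)) := by
        rw [Submodule.map_comap_eq]
        exact (inf_eq_right.mpr hle).symm
      rw [heq]
      exact Submodule.FG.map _ (IsNoetherian.noetherian _)
  -- apply the module lemma
  apply Set.Finite.subset (my_module_finiteness N hN haN hbN hind)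
  rintro p ⟨hp, r, s, hrs, lam, heq⟩
  have hlam0 : lam ≠ 0 := by
    intro h0
    rw [h0, zero_pow hp.ne_zero] at heq
    exact (mul_ne_zero (zpow_ne_zero r hα) (zpow_ne_zero s hβ)) heq
  set lam' : Kˣ := Units.mk0 lam hlam0 with hlam'
  have hequ : α' ^ r * β' ^ s = lam' ^ (p : ℤ) := by
    ext
    rw [Units.val_mul, Units.val_zpow_eq_zpow_val, Units.val_zpow_eq_zpow_val,
      Units.val_zpow_eq_zpow_val]
    rw [hα', hβ', hlam']
    simpa [zpow_natCast] using heq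
  have hcN : Additive.ofMul lam' ∈ N := by
    apply hmemN
    intro v hv
    rw [hSdef, Set.mem_union, not_or] at hv
    have hvα : v.valuation K α = 1 := not_not.mp hv.1
    have hvβ : v.valuation K β = 1 := not_not.mp hv.2
    have h1 : v.valuation K lam ^ p = 1 := by
      have h2 := congrArg (v.valuation K) heq
      rw [map_mul, map_zpow₀, map_zpow₀, map_pow, hvα, hvβ, one_zpow, one_zpow, one_mul] at h2
      exact h2.symm
    exact my_zm0_pow_eq_one ((v.valuation K).ne_zero_iff.mpr hlam0) hp.ne_zero h1
  refine ⟨hp, r, s, hrs, Additive.ofMul lam', hcN, ?_⟩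
  rw [← ofMul_zpow, ← ofMul_zpow, ← ofMul_mul, ← ofMul_zpow, hequ]
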